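/- Let D ∈ ℝ^{n×m}, and let S_T = [I_{n−1} 0] and S_B = [0 I_{n−1}] be the top and bottom (n−1)-row extraction operators. Let Γ = (α_1,…,α_P) with α_i ∈ ℝ^m, under cyclic indexing α_{P+1} = α_1. Then MΓ = 0 (with M as defined from the global convolutional dictionary D_G by M's i-th block row equal to Q_i − R_i D_G) if and only if S_B D α_i = S_T D α_{i+1} for every i = 1,…,P. -/

import Mathlib

open Matrix

noncomputable section

/-- Cyclic patch-extraction operator: extracts the `n` consecutive coordinates of a signal of
length `N` starting at position `i`, indices taken modulo `N`. -/
def Rop (N n : ℕ) (i : Fin N) : Matrix (Fin n) (Fin N) ℝ :=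
  Matrix.of fun k j => if (j : ℕ) = ((i : ℕ) + (k : ℕ)) % N then 1 else 0

/-- Global convolutional dictionary: horizontal concatenation of the blocks `(1/n) • Rᵢᵀ D`. -/
def DG (N n m : ℕ) (D : Matrix (Fin n) (Fin m) ℝ) : Matrix (Fin N) (Fin N × Fin m) ℝ :=
  Matrix.of fun x p => ((1 / (n : ℝ)) • ((Rop N n p.1)ᵀ * D)) x p.2

/-- `Qᵢ` places `D` in block position `i` and zeros elsewhere. -/
def Qop (N n m : ℕ) (D : Matrix (Fin n) (Fin m) ℝ) (i : Fin N) :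
    Matrix (Fin n) (Fin N × Fin m) ℝ :=
  Matrix.of fun k p => if p.1 = i then D k p.2 else 0

/-- Patch-agreement constraint matrix `M`: block rows `Qᵢ - Rᵢ D_G`. -/
def Mop (N n m : ℕ) (D : Matrix (Fin n) (Fin m) ℝ) :
    Matrix (Fin N × Fin n) (Fin N × Fin m) ℝ :=
  Matrix.of fun q p => (Qop N n m D q.1 - Rop N n q.1 * DG N n m D) q.2 p

/-- Bottom extraction operator `S_B = [0  I_{n-1}]`. -/
def SBop (n : ℕ) : Matrix (Fin (n - 1)) (Fin n) ℝ :=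
  Matrix.of fun r j => if (j : ℕ) = (r : ℕ) + 1 then 1 else 0

/-- Top extraction operator `S_T = [I_{n-1}  0]`. -/
def STop (n : ℕ) : Matrix (Fin (n - 1)) (Fin n) ℝ :=
  Matrix.of fun r j => if (j : ℕ) = (r : ℕ) then 1 else 0

/-- `ℓ₀` pseudo-norm: the number of nonzero entries. -/
def l0 {m : ℕ} (α : Fin m → ℝ) : ℕ := (Function.support α).ncard

/-- The support of a vector, as a `Finset`. -/
def suppF {m : ℕ} (α : Fin m → ℝ) : Finset (Fin m) :=
  (Set.toFinite (Function.support α)).toFinset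

/-- The spark of a dictionary: the minimal number of linearly dependent columns (`⊤` if the
columns are linearly independent). -/
def spark {n m : ℕ} (D : Matrix (Fin n) (Fin m) ℝ) : ℕ∞ :=
  sInf {j : ℕ∞ | ∃ s : Finset (Fin m), (s.card : ℕ∞) = j ∧
    (D.submatrix id (fun a : {a // a ∈ s} => (a : Fin m))).rank < s.card}

/-- The globalized spark relative to a family `T` of allowed supports. -/
def gspark {n m : ℕ} (D : Matrix (Fin n) (Fin m) ℝ) (T : Set (Finset (Fin m))) : ℕ∞ :=
  sInf {j : ℕ∞ | ∃ s₁ ∈ T, ∃ s₂ ∈ T, (((s₁ ∪ s₂).card : ℕ) : ℕ∞) = j ∧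
    (D.submatrix id (fun a : {a // a ∈ s₁ ∪ s₂} => (a : Fin m))).rank < (s₁ ∪ s₂).card}

open Fin.NatCast Fin.CommRing

lemma cond_iff (N : ℕ) [NeZero N] (i p : Fin N) (a b : ℕ) :
    (((i:ℕ)+a) % N = ((p:ℕ)+b) % N) ↔ p = i + (a : Fin N) - (b : Fin N) := by
  have h1 : ∀ (x : Fin N) (c : ℕ), ((x:ℕ) + c % N) % N = ((x:ℕ) + c) % N := fun x c => by
    rw [Nat.add_mod, Nat.mod_mod_of_dvd _ dvd_rfl, ← Nat.add_mod]
  rw [eq_sub_iff_add_eq, eq_comm, Fin.ext_iff]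
  simp only [Fin.add_def, Fin.val_natCast, h1]

lemma M_apply (n m N : ℕ) [NeZero N] (D : Matrix (Fin n) (Fin m) ℝ)
    (Γ : Fin N × Fin m → ℝ) (i : Fin N) (k : Fin n) :
    (Mop N n m D).mulVec Γ (i, k) =
      (∑ a, D k a * Γ (i, a)) -
        (1 / (n:ℝ)) * ∑ j : Fin n, ∑ a, D j a * Γ (i + ((k:ℕ) : Fin N) - ((j:ℕ) : Fin N), a) := by
  have key : ∀ p : Fin N × Fin m, (Rop N n i * DG N n m D) k p =
      (1 / (n:ℝ)) * ∑ j : Fin n, (if p.1 = i + ((k:ℕ) : Fin N) - ((j:ℕ) : Fin N) then D j p.2 else 0) := by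
    intro p
    have hx : ∀ x : Fin N, ((x:ℕ) = ((i:ℕ)+(k:ℕ)) % N) ↔ x = ((((i:ℕ)+(k:ℕ)) % N : ℕ) : Fin N) := by
      intro x
      rw [Fin.ext_iff, Fin.val_natCast, Nat.mod_mod_of_dvd _ dvd_rfl]
    simp only [Matrix.mul_apply, Rop, DG, Matrix.of_apply, ite_mul, one_mul, zero_mul, hx,
      Finset.sum_ite_eq', Finset.mem_univ, if_true]
    simp only [Matrix.smul_apply, Matrix.mul_apply, Matrix.transpose_apply, Rop, Matrix.of_apply,
      smul_eq_mul, Fin.val_natCast, Nat.mod_mod_of_dvd _ dvd_rfl]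
    congr 1
    apply Finset.sum_congr rfl
    intro j _
    simp only [cond_iff]
    split <;> simp
  simp only [Matrix.mulVec, dotProduct, Mop, Matrix.of_apply, Matrix.sub_apply, sub_mul,
    Finset.sum_sub_distrib, Qop, key]
  congr 1
  · rw [Fintype.sum_prod_type]
    simp [Finset.sum_ite_eq', ite_mul]
  · rw [Fintype.sum_prod_type, Finset.mul_sum]
    simp only [mul_assoc, ← Finset.mul_sum]
    congr 1
    rw [Finset.sum_comm]
    have hy : ∀ y : Fin m,
        (∑ x : Fin N, (∑ j : Fin n, if x = i + ((k:ℕ):Fin N) - ((j:ℕ):Fin N) then D j y else 0) * Γ (x, y))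
          = ∑ j : Fin n, D j y * Γ (i + ((k:ℕ):Fin N) - ((j:ℕ):Fin N), y) := by
      intro y
      simp only [Finset.sum_mul, ite_mul, zero_mul]
      rw [Finset.sum_comm]
      simp [Finset.sum_ite_eq']
    simp only [hy]
    rw [Finset.sum_comm]

lemma SB_apply (n : ℕ) (v : Fin n → ℝ) (r : Fin (n-1)) (h : (r:ℕ)+1 < n) :
    (SBop n).mulVec v r = v ⟨(r:ℕ)+1, h⟩ := by
  have e : ∀ j : Fin n, ((j:ℕ) = (r:ℕ)+1) ↔ (j = ⟨(r:ℕ)+1, h⟩) := fun j => by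
    simp [Fin.ext_iff]
  simp [SBop, Matrix.mulVec, dotProduct, e, ite_mul, Finset.sum_ite_eq']

lemma ST_apply (n : ℕ) (v : Fin n → ℝ) (r : Fin (n-1)) (h : (r:ℕ) < n) :
    (STop n).mulVec v r = v ⟨(r:ℕ), h⟩ := by
  have e : ∀ j : Fin n, ((j:ℕ) = (r:ℕ)) ↔ (j = ⟨(r:ℕ), h⟩) := fun j => by
    simp [Fin.ext_iff]
  simp [STop, Matrix.mulVec, dotProduct, e, ite_mul, Finset.sum_ite_eq']

/-- `MΓ = 0` iff consecutive patches agree on their overlaps: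
`S_B D αᵢ = S_T D αᵢ₊₁` for all `i` (cyclically). -/
theorem M_eq_zero_iff_overlap (n m N : ℕ) [NeZero N] (hn : 0 < n) (hnN : n ≤ N)
    (D : Matrix (Fin n) (Fin m) ℝ) (Γ : Fin N × Fin m → ℝ) :
    (Mop N n m D).mulVec Γ = 0 ↔
      ∀ i : Fin N, (SBop n).mulVec (D.mulVec fun a => Γ (i, a)) =
        (STop n).mulVec (D.mulVec fun a => Γ (i + 1, a)) := by
  set β : Fin N → Fin n → ℝ := fun i k => ∑ a, D k a * Γ (i, a) with hβ
  have hmv : ∀ (i : Fin N) (k : Fin n), D.mulVec (fun a => Γ (i, a)) k = β i k := by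
    intro i k; simp [Matrix.mulVec, dotProduct, hβ]
  constructor
  · intro h i
    funext r
    have hr1 : (r:ℕ) + 1 < n := by have := r.isLt; omega
    have hr0 : (r:ℕ) < n := by omega
    rw [SB_apply n _ r hr1, ST_apply n _ r hr0, hmv, hmv]
    have e1 := M_apply n m N D Γ i ⟨(r:ℕ)+1, hr1⟩
    have e2 := M_apply n m N D Γ (i+1) ⟨(r:ℕ), hr0⟩
    have z1 : (Mop N n m D).mulVec Γ (i, ⟨(r:ℕ)+1, hr1⟩) = 0 := by rw [h]; rfl
    have z2 : (Mop N n m D).mulVec Γ (i+1, ⟨(r:ℕ), hr0⟩) = 0 := by rw [h]; rfl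
    rw [z1] at e1; rw [z2] at e2
    have hidx : ∀ j : Fin n,
        i + (((r:ℕ)+1 : ℕ) : Fin N) - ((j:ℕ) : Fin N) = i + 1 + ((r:ℕ) : Fin N) - ((j:ℕ) : Fin N) := by
      intro j; push_cast; ring
    have : β i ⟨(r:ℕ)+1, hr1⟩ = β (i+1) ⟨(r:ℕ), hr0⟩ := by
      have e1' : β i ⟨(r:ℕ)+1, hr1⟩
          = (1 / (n:ℝ)) * ∑ j : Fin n, ∑ a, D j a * Γ (i + (((r:ℕ)+1:ℕ) : Fin N) - ((j:ℕ) : Fin N), a) := by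
        have := e1.symm; linarith [this]
      have e2' : β (i+1) ⟨(r:ℕ), hr0⟩
          = (1 / (n:ℝ)) * ∑ j : Fin n, ∑ a, D j a * Γ (i + 1 + (((r:ℕ):ℕ) : Fin N) - ((j:ℕ) : Fin N), a) := by
        have := e2.symm; linarith [this]
      rw [e1', e2']
      congr 1
      exact Finset.sum_congr rfl fun j _ => by rw [hidx j]
    exact this
  · intro h
    have hstep : ∀ (i : Fin N) (c : ℕ) (hc : c + 1 < n),
        β i ⟨c+1, hc⟩ = β (i+1) ⟨c, by omega⟩ := by
      intro i c hc
      have hr : c < n - 1 := by omega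
      have := congrFun (h i) ⟨c, hr⟩
      rwa [SB_apply n _ ⟨c, hr⟩ (by simpa using hc), ST_apply n _ ⟨c, hr⟩ (by omega), hmv, hmv] at this
    have claim : ∀ (c : ℕ) (hc : c < n) (i : Fin N),
        β i ⟨c, hc⟩ = β (i + (c : Fin N)) ⟨0, hn⟩ := by
      intro c
      induction c with
      | zero => intro hc i; simp
      | succ c ih =>
        intro hc i
        have hc' : c < n := by omega
        rw [hstep i c hc, ih hc' (i+1)]
        congr 1
        push_cast; ring
    funext q
    obtain ⟨i, k⟩ := q
    rw [Pi.zero_apply, M_apply]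
    have hterm : ∀ j : Fin n,
        (∑ a, D j a * Γ (i + ((k:ℕ) : Fin N) - ((j:ℕ) : Fin N), a)) = β (i + ((k:ℕ) : Fin N)) ⟨0, hn⟩ := by
      intro j
      have := claim (j:ℕ) j.isLt (i + ((k:ℕ) : Fin N) - ((j:ℕ) : Fin N))
      simp only [Fin.eta] at this
      rw [show (∑ a, D j a * Γ (i + ((k:ℕ) : Fin N) - ((j:ℕ) : Fin N), a))
          = β (i + ((k:ℕ) : Fin N) - ((j:ℕ) : Fin N)) j from rfl, this, sub_add_cancel]
    have hk := claim (k:ℕ) k.isLt i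
    simp only [Fin.eta] at hk
    rw [show (∑ a, D k a * Γ (i, a)) = β i k from rfl, hk]
    rw [Finset.sum_congr rfl fun j _ => hterm j, Finset.sum_const, Finset.card_univ,
      Fintype.card_fin, nsmul_eq_mul]
    have hne : (n:ℝ) ≠ 0 := Nat.cast_ne_zero.mpr hn.ne'
    field_simp
    simp
end
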